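/- Let L, T ∈ (0,∞), p ∈ [2,∞), 𝔅 ∈ [1,∞), and let (m_k)_{k∈ℕ} ⊆ ℕ satisfy lim inf_{j→∞} m_j = ∞, lim sup_{j→∞} (m_j)^{p/2}/j < ∞, and m_{k+1} ≤ 𝔅 m_k for all k. Define 𝔪_n = [(1+2LT)(m_n)^{-1/2} exp((m_n)^{p/2}/n)]^n. Then lim_{n→∞} 𝔪_n = 0. -/

import Mathlib

open Filter

theorem stmt_11 (L T p 𝔅 : ℝ) (hL : 0 < L) (hT : 0 < T) (hp : 2 ≤ p) (h𝔅 : 1 ≤ 𝔅)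
    (m : ℕ → ℕ) (hm1 : ∀ k, 1 ≤ m k)
    (hliminf : Tendsto (fun j => (m j : ℝ)) atTop atTop)
    (hlimsup : IsBoundedUnder (· ≤ ·) atTop (fun j => (m j : ℝ) ^ (p / 2) / (j : ℝ)))
    (hgrow : ∀ k, (m (k + 1) : ℝ) ≤ 𝔅 * m k) :
    Tendsto
      (fun n : ℕ =>
        ((1 + 2 * L * T) * (m n : ℝ) ^ (-(1 : ℝ) / 2) *
            Real.exp ((m n : ℝ) ^ (p / 2) / (n : ℝ))) ^ n)
      atTop (nhds 0) := by
  obtain ⟨C, hC⟩ := hlimsup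
  rw [eventually_map] at hC
  have hcpos : (0:ℝ) < 1 + 2 * L * T := by nlinarith
  have hrpow : Tendsto (fun n => (m n : ℝ) ^ (-(1 : ℝ) / 2)) atTop (nhds 0) := by
    have := (tendsto_rpow_neg_atTop (by norm_num : (0:ℝ) < 1/2)).comp hliminf
    simpa [neg_div, Function.comp_def] using this
  have hb : Tendsto (fun n => (1 + 2 * L * T) * (m n : ℝ) ^ (-(1 : ℝ) / 2) * Real.exp C)
      atTop (nhds 0) := by
    have := (hrpow.const_mul (1 + 2 * L * T)).mul_const (Real.exp C)
    simpa using this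
  have hhalf : ∀ᶠ n in atTop,
      (1 + 2 * L * T) * (m n : ℝ) ^ (-(1 : ℝ) / 2) * Real.exp C ≤ 1/2 :=
    hb.eventually (eventually_le_nhds (by norm_num))
  apply squeeze_zero' (g := fun n : ℕ => (1/2 : ℝ) ^ n)
  · filter_upwards with n
    positivity
  · filter_upwards [hC, hhalf] with n hCn hhn
    apply pow_le_pow_left₀ _ _ n
    · positivity
    · calc (1 + 2 * L * T) * (m n : ℝ) ^ (-(1 : ℝ) / 2) *
            Real.exp ((m n : ℝ) ^ (p / 2) / (n : ℝ))
          ≤ (1 + 2 * L * T) * (m n : ℝ) ^ (-(1 : ℝ) / 2) * Real.exp C := by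
            apply mul_le_mul_of_nonneg_left (Real.exp_le_exp.2 hCn)
            positivity
      _ ≤ 1/2 := hhn
  · exact tendsto_pow_atTop_nhds_zero_of_lt_one (by norm_num) (by norm_num)
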